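/- Let {·_λ·} be a λ-bracket of rank d on 𝒜 (ℝ-bilinear, sesquilinear, satisfying the left and right Leibniz rules). Then {·_λ·} is skewsymmetric on every pair (f,g) ∈ 𝒜 × 𝒜 if and only if it is skewsymmetric on every pair of generators (u^i, u^j), 1 ≤ i, j ≤ n. -/

import Mathlib

open MvPolynomial

/-- Multi-indices `I ∈ ℤ_{≥0}^d`. -/
abbrev MIdx (d : ℕ) := Fin d →₀ ℕ

/-- The algebra of differential polynomials: the commutative polynomial `ℝ`-algebra on
indeterminates `u^i_I`, `i ∈ {1,…,n}`, `I ∈ ℤ_{≥0}^d`. -/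
abbrev DP (n d : ℕ) := MvPolynomial (Fin n × MIdx d) ℝ

/-- The `α`-th standard basis multi-index `E_α`. -/
noncomputable def Eidx {d : ℕ} (α : Fin d) : MIdx d := Finsupp.single α 1

/-- The total derivative `∂_α`: the unique derivation of `DP n d` with
`∂_α (u^i_I) = u^i_{I+E_α}`. -/
noncomputable def tder (n d : ℕ) (α : Fin d) (f : DP n d) : DP n d :=
  ∑ v ∈ f.vars, X (v.1, v.2 + Eidx α) * pderiv v f

section LambdaGeneric

variable {A : Type*} [CommRing A]

/-- Coefficientwise application of an operator `T : A → A` to a polynomial in `λ₁,…,λ_d`. -/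
noncomputable def cderG (d : ℕ) (T : A → A) (P : MvPolynomial (Fin d) A) :
    MvPolynomial (Fin d) A :=
  ∑ m ∈ P.support, monomial m (T (coeff m P))

/-- The operator `λ_α + ∂_α` on `A[λ₁,…,λ_d]` (multiplication by `λ_α` plus
coefficientwise `∂_α = T α`). -/
noncomputable def lopG (d : ℕ) (T : Fin d → A → A) (α : Fin d)
    (P : MvPolynomial (Fin d) A) : MvPolynomial (Fin d) A :=
  X α * P + cderG d (T α) P

/-- The operator `−λ_α − ∂_α` on `A[λ₁,…,λ_d]`. -/
noncomputable def nlopG (d : ℕ) (T : Fin d → A → A) (α : Fin d)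
    (P : MvPolynomial (Fin d) A) : MvPolynomial (Fin d) A :=
  -(X α * P) - cderG d (T α) P

/-- `Π_α (λ_α + ∂_α)^{N_α}`. -/
noncomputable def lopPowG (d : ℕ) (T : Fin d → A → A) (N : Fin d →₀ ℕ)
    (P : MvPolynomial (Fin d) A) : MvPolynomial (Fin d) A :=
  (List.finRange d).foldl (fun Q α => (lopG d T α)^[N α] Q) P

/-- `Π_α (−λ_α − ∂_α)^{N_α}`. -/
noncomputable def nlopPowG (d : ℕ) (T : Fin d → A → A) (N : Fin d →₀ ℕ)
    (P : MvPolynomial (Fin d) A) : MvPolynomial (Fin d) A :=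
  (List.finRange d).foldl (fun Q α => (nlopG d T α)^[N α] Q) P

/-- For `Q = Σ_N C_N λ^N`, the operator `a ↦ Σ_N C_N · Π_α(λ_α+∂_α)^{N_α}(a)`,
i.e. the action of `Q` with `λ` replaced by `λ + ∂`. -/
noncomputable def hatActG (d : ℕ) (T : Fin d → A → A) (Q P : MvPolynomial (Fin d) A) :
    MvPolynomial (Fin d) A :=
  ∑ m ∈ Q.support, C (coeff m Q) * lopPowG d T m P

/-- For `P = Σ_N C_N λ^N`, the element `Σ_N Π_α(−λ_α−∂_α)^{N_α}(C_N)`. -/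
noncomputable def skewAdjG (d : ℕ) (T : Fin d → A → A) (P : MvPolynomial (Fin d) A) :
    MvPolynomial (Fin d) A :=
  ∑ m ∈ P.support, nlopPowG d T m (C (coeff m P))

/-- Sesquilinearity of a `λ`-bracket with respect to the derivations `T α`. -/
def SesqG (d : ℕ) (T : Fin d → A → A) (B : A → A → MvPolynomial (Fin d) A) : Prop :=
  ∀ (α : Fin d) (f g : A),
    B (T α f) g = -(X α * B f g) ∧ B f (T α g) = lopG d T α (B f g)

/-- The right Leibniz rule `{f_λ gh} = {f_λ g}h + {f_λ h}g`. -/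
def RLeibG (d : ℕ) (B : A → A → MvPolynomial (Fin d) A) : Prop :=
  ∀ f g h : A, B f (g * h) = B f g * C h + B f h * C g

/-- The left Leibniz rule `{fg_λ h} = {f_{λ+∂} h}·g + {g_{λ+∂} h}·f`. -/
def LLeibG (d : ℕ) (T : Fin d → A → A) (B : A → A → MvPolynomial (Fin d) A) : Prop :=
  ∀ f g h : A, B (f * g) h = hatActG d T (B f h) (C g) + hatActG d T (B g h) (C f)

/-- Skewsymmetry on the pair `(f,g)`: `{g_λ f} = −Σ_N Π_α(−λ_α−∂_α)^{N_α}(C_N)`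
where `{f_λ g} = Σ_N C_N λ^N`. -/
def SkewOnG (d : ℕ) (T : Fin d → A → A) (B : A → A → MvPolynomial (Fin d) A)
    (f g : A) : Prop :=
  B g f = -skewAdjG d T (B f g)

/-- `A[λ][μ]`: polynomials in `μ₁,…,μ_d` with coefficients polynomials in `λ₁,…,λ_d`. -/
abbrev MP2 (d : ℕ) (A : Type*) [CommRing A] :=
  MvPolynomial (Fin d) (MvPolynomial (Fin d) A)

/-- Embed a polynomial in `μ` with coefficients in `A` into `A[λ][μ]`. -/
noncomputable def toOuterG (d : ℕ) (Q : MvPolynomial (Fin d) A) : MP2 d A :=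
  ∑ m ∈ Q.support, monomial m (C (coeff m Q))

/-- `λ_α + μ_α` as an element of `A[λ][μ]`. -/
noncomputable def lamMuG (d : ℕ) (α : Fin d) : MP2 d A := C (X α) + X α

/-- `Π_α (λ_α + μ_α)^{M_α}` in `A[λ][μ]`. -/
noncomputable def lmPowG (d : ℕ) (M : Fin d →₀ ℕ) : MP2 d A :=
  M.prod fun α k => (lamMuG d α) ^ k

/-- `{f_λ {g_μ h}}` as an element of `A[λ][μ]`, the outer bracket `B1` applied
coefficientwise to the polynomial `{g_μ h}` in `μ`. -/
noncomputable def jac1G (d : ℕ) (B1 B2 : A → A → MvPolynomial (Fin d) A)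
    (f g h : A) : MP2 d A :=
  ∑ m ∈ (B2 g h).support, monomial m (B1 f (coeff m (B2 g h)))

/-- `{g_μ {f_λ h}}` as an element of `A[λ][μ]`, the outer bracket `B1` (in `μ`) applied
coefficientwise to the polynomial `{f_λ h}` in `λ`. -/
noncomputable def jac2G (d : ℕ) (B1 B2 : A → A → MvPolynomial (Fin d) A)
    (f g h : A) : MP2 d A :=
  ∑ N ∈ (B2 f h).support,
    C (monomial N (1 : A)) * toOuterG d (B1 g (coeff N (B2 f h)))

/-- `{{f_λ g}_{λ+μ} h}`: with `{f_λ g}_{B1} = Σ_N C_N λ^N` and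
`{C_N μ h}_{B2} = Σ_M D_{N,M} μ^M`, this is `Σ_N λ^N Σ_M D_{N,M}·Π_α(λ_α+μ_α)^{M_α}`. -/
noncomputable def jac3G (d : ℕ) (B1 B2 : A → A → MvPolynomial (Fin d) A)
    (f g h : A) : MP2 d A :=
  ∑ N ∈ (B1 f g).support,
    C (monomial N (1 : A)) *
      ∑ M ∈ (B2 (coeff N (B1 f g)) h).support,
        C (C (coeff M (B2 (coeff N (B1 f g)) h))) * lmPowG d M

/-- The PVA–Jacobi identity on the triple `(f,g,h)`:
`{f_λ {g_μ h}} − {g_μ {f_λ h}} = {{f_λ g}_{λ+μ} h}` in `A[λ,μ]`. -/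
def JacOnG (d : ℕ) (B : A → A → MvPolynomial (Fin d) A) (f g h : A) : Prop :=
  jac1G d B B f g h - jac2G d B B f g h = jac3G d B B f g h

end LambdaGeneric

section BilinGeneric

variable {A : Type*} [CommRing A] [Algebra ℝ A]

/-- `ℝ`-bilinearity of a `λ`-bracket. -/
def BilinG (d : ℕ) (B : A → A → MvPolynomial (Fin d) A) : Prop :=
  (∀ f₁ f₂ g, B (f₁ + f₂) g = B f₁ g + B f₂ g) ∧
  (∀ (r : ℝ) (f g : A), B (r • f) g = r • B f g) ∧
  (∀ f g₁ g₂, B f (g₁ + g₂) = B f g₁ + B f g₂) ∧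
  (∀ (r : ℝ) (f g : A), B f (r • g) = r • B f g)

end BilinGeneric

/-- The generator `u^i = u^i_0` of the algebra of differential polynomials. -/
noncomputable def genU (n d : ℕ) (i : Fin n) : DP n d := X (i, 0)



-- ===== auxiliary development =====



section FoldHelpers

variable {ι M : Type*}

lemma foldl_G_comm (F : ι → M → M) (N : ι → ℕ) (G : M → M)
    (hG : ∀ β x, G (F β x) = F β (G x)) :
    ∀ (L : List ι) (x : M),
      L.foldl (fun Q β => (F β)^[N β] Q) (G x) = G (L.foldl (fun Q β => (F β)^[N β] Q) x) := by
  intro L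
  induction L with
  | nil => intro x; simp
  | cons β L ih =>
      intro x
      simp only [List.foldl_cons]
      have hc : Function.Commute G (F β) := fun y => hG β y
      rw [← (hc.iterate_right (N β)).eq x, ih]

lemma foldl_congr_exp (F : ι → M → M) (N₁ N₂ : ι → ℕ)
    (L : List ι) (hL : ∀ β ∈ L, N₁ β = N₂ β) (x : M) :
    L.foldl (fun Q β => (F β)^[N₁ β] Q) x = L.foldl (fun Q β => (F β)^[N₂ β] Q) x := by
  induction L generalizing x with
  | nil => rfl
  | cons β L ih =>
      simp only [List.foldl_cons]
      rw [hL β List.mem_cons_self]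
      exact ih (fun γ hγ => hL γ (List.mem_cons_of_mem _ hγ)) _

lemma foldl_exp_succ [DecidableEq ι] (F : ι → M → M) (N : ι → ℕ) (α : ι)
    (hF : ∀ β γ x, F β (F γ x) = F γ (F β x)) :
    ∀ (L : List ι), L.Nodup → α ∈ L → ∀ (x : M),
      L.foldl (fun Q β => (F β)^[N β + (if β = α then 1 else 0)] Q) x
        = F α (L.foldl (fun Q β => (F β)^[N β] Q) x) := by
  intro L
  induction L with
  | nil => intro _ h; exact absurd h List.not_mem_nil
  | cons β L ih =>
      intro hnd hmem x
      simp only [List.foldl_cons]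
      rcases List.nodup_cons.1 hnd with ⟨hβ, hnd'⟩
      by_cases hba : β = α
      · subst hba
        rw [if_pos rfl]
        have hrest : ∀ γ ∈ L, N γ + (if γ = β then 1 else 0) = N γ := by
          intro γ hγ
          rw [if_neg (by rintro rfl; exact hβ hγ), add_zero]
        rw [foldl_congr_exp F _ N L hrest]
        rw [Function.iterate_succ_apply']
        exact foldl_G_comm F N (F β) (fun γ y => hF β γ y) L _
      · rw [if_neg hba, add_zero]
        have hmem' : α ∈ L := by
          rcases List.mem_cons.1 hmem with h | h
          · exact absurd h.symm hba
          · exact h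
        exact ih hnd' hmem' _

lemma foldl_exp_zero (F : ι → M → M) (L : List ι) (x : M) :
    L.foldl (fun Q β => (F β)^[(0:ℕ)] Q) x = x := by
  induction L generalizing x with
  | nil => rfl
  | cons β L ih => simp only [List.foldl_cons, Function.iterate_zero_apply]; exact ih x

lemma iterate_add_map [AddCommGroup M] (F : M → M) (hF : ∀ x y, F (x + y) = F x + F y)
    (k : ℕ) (x y : M) : F^[k] (x + y) = F^[k] x + F^[k] y := by
  induction k generalizing x y with
  | zero => simp
  | succ k ih => simp only [Function.iterate_succ_apply, hF, ih]

lemma foldl_add_map [AddCommGroup M] (F : ι → M → M) (N : ι → ℕ)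
    (hF : ∀ β x y, F β (x + y) = F β x + F β y) (L : List ι) (x y : M) :
    L.foldl (fun Q β => (F β)^[N β] Q) (x + y)
      = L.foldl (fun Q β => (F β)^[N β] Q) x + L.foldl (fun Q β => (F β)^[N β] Q) y := by
  induction L generalizing x y with
  | nil => rfl
  | cons β L ih =>
      simp only [List.foldl_cons]
      rw [iterate_add_map (F β) (hF β) (N β) x y, ih]

lemma addmap_zero [AddCommGroup M] (F : M → M) (hF : ∀ x y, F (x + y) = F x + F y) :
    F 0 = 0 := by
  have := hF 0 0
  rw [add_zero] at this
  exact (left_eq_add.1 this)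

lemma foldl_zero [AddCommGroup M] (F : ι → M → M) (N : ι → ℕ)
    (hF : ∀ β x y, F β (x + y) = F β x + F β y) (L : List ι) :
    L.foldl (fun Q β => (F β)^[N β] Q) 0 = 0 := by
  have := foldl_add_map F N hF L 0 0
  rw [add_zero] at this
  exact add_eq_left.mp this.symm

end FoldHelpers

lemma midx_induction {d : ℕ} (P : (Fin d →₀ ℕ) → Prop) (h0 : P 0)
    (hs : ∀ N (α : Fin d), P N → P (N + Finsupp.single α 1)) : ∀ N, P N := by
  classical
  suffices h : ∀ (n : ℕ) (N : Fin d →₀ ℕ), N.sum (fun _ k => k) = n → P N by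
    intro N; exact h _ N rfl
  intro n
  induction n with
  | zero =>
      intro N hN
      have : N = 0 := by
        ext β
        by_contra hβ
        have hmem : β ∈ N.support := Finsupp.mem_support_iff.2 (fun h => hβ (by simp [h]))
        have : 0 < N.sum (fun _ k => k) :=
          Finset.sum_pos' (fun _ _ => Nat.zero_le _)
            ⟨β, hmem, Nat.pos_of_ne_zero (Finsupp.mem_support_iff.1 hmem)⟩
        omega
      rwa [this]
  | succ n ih =>
      intro N hN
      have hNne : N ≠ 0 := by
        intro h; rw [h] at hN; simp [Finsupp.sum_zero_index] at hN
      obtain ⟨α, hα⟩ := Finsupp.ne_iff.1 hNne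
      have hα' : N α ≠ 0 := by simpa using hα
      set N' : Fin d →₀ ℕ := N - Finsupp.single α 1 with hN'
      have hdec : N = N' + Finsupp.single α 1 := by
        ext β
        simp only [Finsupp.add_apply, hN', Finsupp.tsub_apply, Finsupp.single_apply]
        by_cases hβ : α = β
        · subst hβ; simp; omega
        · simp [hβ]
      have hsum : N'.sum (fun _ k => k) = n := by
        have : N.sum (fun _ k => k) = N'.sum (fun _ k => k) + 1 := by
          rw [hdec, Finsupp.sum_add_index' (fun _ => rfl) (fun _ _ _ => rfl),
            Finsupp.sum_single_index rfl]
        omega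
      rw [hdec]
      exact hs N' α (ih N' hsum)

noncomputable def Dder (n d : ℕ) (α : Fin d) : Derivation ℝ (DP n d) (DP n d) :=
  MvPolynomial.mkDerivation ℝ (fun v => X (v.1, v.2 + Eidx α))

lemma Dder_X (n d : ℕ) (α : Fin d) (v : Fin n × MIdx d) :
    Dder n d α (X v) = X (v.1, v.2 + Eidx α) := mkDerivation_X _ _ _

lemma tder_superset (n d : ℕ) (α : Fin d) (f : DP n d) (s : Finset (Fin n × MIdx d))
    (hs : f.vars ⊆ s) :
    tder n d α f = ∑ v ∈ s, X (v.1, v.2 + Eidx α) * pderiv v f := by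
  rw [tder]
  refine Finset.sum_subset hs (fun v _ hv => ?_)
  rw [pderiv_eq_zero_of_notMem_vars hv, mul_zero]

lemma tder_add (n d : ℕ) (α : Fin d) (f g : DP n d) :
    tder n d α (f + g) = tder n d α f + tder n d α g := by
  classical
  rw [tder_superset n d α (f+g) (f.vars ∪ g.vars) (vars_add_subset f g),
      tder_superset n d α f (f.vars ∪ g.vars) Finset.subset_union_left,
      tder_superset n d α g (f.vars ∪ g.vars) Finset.subset_union_right,
      ← Finset.sum_add_distrib]
  refine Finset.sum_congr rfl fun v _ => by rw [map_add, mul_add]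

lemma tder_C (n d : ℕ) (α : Fin d) (r : ℝ) : tder n d α (C r) = 0 := by
  rw [tder, vars_C, Finset.sum_empty]

lemma tder_mul (n d : ℕ) (α : Fin d) (f g : DP n d) :
    tder n d α (f * g) = tder n d α f * g + f * tder n d α g := by
  classical
  rw [tder_superset n d α (f*g) (f.vars ∪ g.vars) (vars_mul f g),
      tder_superset n d α f (f.vars ∪ g.vars) Finset.subset_union_left,
      tder_superset n d α g (f.vars ∪ g.vars) Finset.subset_union_right,
      Finset.sum_mul, Finset.mul_sum, ← Finset.sum_add_distrib]
  refine Finset.sum_congr rfl fun v _ => ?_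
  rw [pderiv_mul]; ring

lemma tder_X (n d : ℕ) (α : Fin d) (v : Fin n × MIdx d) :
    tder n d α (X v) = X (v.1, v.2 + Eidx α) := by
  rw [tder, vars_X, Finset.sum_singleton, pderiv_X_self, mul_one]

lemma tder_eq_D (n d : ℕ) (α : Fin d) (f : DP n d) : tder n d α f = Dder n d α f := by
  induction f using MvPolynomial.induction_on with
  | C r => rw [tder_C, derivation_C]
  | add p q hp hq => rw [tder_add, map_add, hp, hq]
  | mul_X p v hp =>
      rw [tder_mul, Derivation.leibniz, tder_X, hp, Dder_X, smul_eq_mul, smul_eq_mul]; ring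

lemma tder_one (n d : ℕ) (α : Fin d) : tder n d α 1 = 0 := by
  rw [tder_eq_D]; exact Derivation.map_one_eq_zero _

lemma tder_zero (n d : ℕ) (α : Fin d) : tder n d α 0 = 0 := by
  rw [tder_eq_D]; exact map_zero _

lemma tder_smul (n d : ℕ) (α : Fin d) (r : ℝ) (f : DP n d) :
    tder n d α (r • f) = r • tder n d α f := by
  rw [tder_eq_D, tder_eq_D, Derivation.map_smul]

lemma tder_comm (n d : ℕ) (α β : Fin d) (f : DP n d) :
    tder n d α (tder n d β f) = tder n d β (tder n d α f) := by
  have h : ⁅Dder n d α, Dder n d β⁆ = (0 : Derivation ℝ (DP n d) (DP n d)) := by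
    apply derivation_ext
    intro v
    rw [Derivation.commutator_apply, Dder_X, Dder_X, Dder_X, Dder_X]
    simp only [Derivation.zero_apply]
    rw [add_right_comm, sub_self]
  have h2 : ⁅Dder n d α, Dder n d β⁆ f = (0 : Derivation ℝ (DP n d) (DP n d)) f := by rw [h]
  rw [Derivation.commutator_apply, Derivation.zero_apply, sub_eq_zero] at h2
  rw [tder_eq_D, tder_eq_D, tder_eq_D, tder_eq_D, h2]

section Ops
variable {A : Type*} [CommRing A] {d : ℕ} (T : Fin d → A → A)

lemma coeff_cderG (D : A → A) (hD : D 0 = 0) (P : MvPolynomial (Fin d) A) (m : Fin d →₀ ℕ) :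
    coeff m (cderG d D P) = D (coeff m P) := by
  classical
  rw [cderG, coeff_sum]
  simp only [coeff_monomial]
  rw [Finset.sum_ite_eq' P.support m (fun m' => D (coeff m' P))]
  by_cases hm : m ∈ P.support
  · rw [if_pos hm]
  · rw [if_neg hm, notMem_support_iff.1 hm, hD]

variable (hTadd : ∀ (α : Fin d) (x y : A), T α (x + y) = T α x + T α y)
variable (hTcomm : ∀ (α β : Fin d) (x : A), T α (T β x) = T β (T α x))
variable (hTmul : ∀ (α : Fin d) (x y : A), T α (x * y) = T α x * y + x * T α y)

section Basic
include hTadd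

lemma T_zero (α : Fin d) : T α 0 = 0 := addmap_zero (T α) (hTadd α)

lemma cder_add (α : Fin d) (P Q : MvPolynomial (Fin d) A) :
    cderG d (T α) (P + Q) = cderG d (T α) P + cderG d (T α) Q := by
  apply MvPolynomial.ext; intro m
  rw [coeff_add, coeff_cderG _ (T_zero T hTadd α), coeff_cderG _ (T_zero T hTadd α),
    coeff_cderG _ (T_zero T hTadd α), coeff_add, hTadd]

lemma cder_C (α : Fin d) (a : A) : cderG d (T α) (C a) = C (T α a) := by
  apply MvPolynomial.ext; intro m
  classical
  rw [coeff_cderG _ (T_zero T hTadd α), coeff_C, coeff_C]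
  by_cases h : 0 = m
  · rw [if_pos h, if_pos h]
  · rw [if_neg h, if_neg h, T_zero T hTadd]

lemma cder_monomial (α : Fin d) (N : Fin d →₀ ℕ) (a : A) :
    cderG d (T α) (monomial N a) = monomial N (T α a) := by
  apply MvPolynomial.ext; intro m
  classical
  rw [coeff_cderG _ (T_zero T hTadd α), coeff_monomial, coeff_monomial]
  by_cases h : N = m
  · rw [if_pos h, if_pos h]
  · rw [if_neg h, if_neg h, T_zero T hTadd]

lemma cder_X_mul (α β : Fin d) (P : MvPolynomial (Fin d) A) :
    cderG d (T α) (X β * P) = X β * cderG d (T α) P := by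
  apply MvPolynomial.ext; intro m
  classical
  rw [coeff_cderG _ (T_zero T hTadd α), coeff_X_mul', coeff_X_mul']
  by_cases h : β ∈ m.support
  · rw [if_pos h, if_pos h, coeff_cderG _ (T_zero T hTadd α)]
  · rw [if_neg h, if_neg h, T_zero T hTadd]

lemma lop_add (α : Fin d) (P Q : MvPolynomial (Fin d) A) :
    lopG d T α (P + Q) = lopG d T α P + lopG d T α Q := by
  rw [lopG, lopG, lopG, cder_add T hTadd]; ring

lemma cder_zero (α : Fin d) : cderG d (T α) (0 : MvPolynomial (Fin d) A) = 0 := by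
  apply MvPolynomial.ext; intro m
  rw [coeff_cderG _ (T_zero T hTadd α)]
  simp [T_zero T hTadd]

lemma lop_zero (α : Fin d) : lopG d T α (0 : MvPolynomial (Fin d) A) = 0 := by
  rw [lopG, cder_zero T hTadd]; ring

lemma lop_neg (α : Fin d) (P : MvPolynomial (Fin d) A) :
    lopG d T α (-P) = -lopG d T α P := by
  have h := lop_add T hTadd α P (-P)
  rw [add_neg_cancel, lop_zero T hTadd] at h
  exact (neg_eq_of_add_eq_zero_right h.symm).symm

end Basic

lemma cder_cder (α β : Fin d) (P : MvPolynomial (Fin d) A)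
    (hTadd : ∀ (α : Fin d) (x y : A), T α (x + y) = T α x + T α y)
    (hTcomm : ∀ (α β : Fin d) (x : A), T α (T β x) = T β (T α x)) :
    cderG d (T α) (cderG d (T β) P) = cderG d (T β) (cderG d (T α) P) := by
  apply MvPolynomial.ext; intro m
  rw [coeff_cderG _ (T_zero T hTadd α), coeff_cderG _ (T_zero T hTadd β),
    coeff_cderG _ (T_zero T hTadd β), coeff_cderG _ (T_zero T hTadd α), hTcomm]

end Ops


section AddMapHelpers
variable {M N : Type*} [AddCommGroup M] [AddCommGroup N]

lemma addmap_zero' (F : M → N) (hadd : ∀ x y, F (x + y) = F x + F y) : F 0 = 0 := by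
  have := hadd 0 0
  rw [add_zero] at this
  exact (left_eq_add.1 this)

lemma addmap_neg (F : M → N) (hadd : ∀ x y, F (x + y) = F x + F y) (x : M) :
    F (-x) = -F x := by
  have h := hadd x (-x)
  rw [add_neg_cancel, addmap_zero' F hadd] at h
  exact (neg_eq_of_add_eq_zero_right h.symm).symm

lemma addmap_sub (F : M → N) (hadd : ∀ x y, F (x + y) = F x + F y) (x y : M) :
    F (x - y) = F x - F y := by
  rw [sub_eq_add_neg, hadd, addmap_neg F hadd, sub_eq_add_neg]

lemma addf_sum {ι : Type*} (F : M → N) (h0 : F 0 = 0)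
    (hadd : ∀ x y, F (x + y) = F x + F y) (s : Finset ι) (g : ι → M) :
    F (∑ i ∈ s, g i) = ∑ i ∈ s, F (g i) := by
  classical
  induction s using Finset.induction with
  | empty => simpa
  | insert _ _ hx ih => rw [Finset.sum_insert hx, Finset.sum_insert hx, hadd, ih]

end AddMapHelpers

section Pow
variable {A : Type*} [CommRing A] {d : ℕ} (T : Fin d → A → A)
variable (hTadd : ∀ (α : Fin d) (x y : A), T α (x + y) = T α x + T α y)
variable (hTcomm : ∀ (α β : Fin d) (x : A), T α (T β x) = T β (T α x))

lemma nlop_eq (α : Fin d) (P : MvPolynomial (Fin d) A) :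
    nlopG d T α P = -lopG d T α P := by
  rw [nlopG, lopG]; ring

include hTadd

lemma nlop_add (α : Fin d) (P Q : MvPolynomial (Fin d) A) :
    nlopG d T α (P + Q) = nlopG d T α P + nlopG d T α Q := by
  rw [nlop_eq, nlop_eq, nlop_eq, lop_add T hTadd]; ring

include hTcomm

lemma lop_comm (α β : Fin d) (P : MvPolynomial (Fin d) A) :
    lopG d T α (lopG d T β P) = lopG d T β (lopG d T α P) := by
  rw [lopG, lopG, lopG, lopG, cder_add T hTadd, cder_add T hTadd,
    cder_X_mul T hTadd, cder_X_mul T hTadd, cder_cder T α β P hTadd hTcomm]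
  ring

lemma nlop_comm (α β : Fin d) (P : MvPolynomial (Fin d) A) :
    nlopG d T α (nlopG d T β P) = nlopG d T β (nlopG d T α P) := by
  simp only [nlop_eq, lop_neg T hTadd, neg_neg]
  rw [lop_comm T hTadd hTcomm]

omit hTadd hTcomm

lemma lopPow_zero (P : MvPolynomial (Fin d) A) : lopPowG d T 0 P = P := by
  rw [lopPowG,
    foldl_congr_exp (lopG d T) (fun β => (0 : Fin d →₀ ℕ) β) (fun _ => 0)
      (List.finRange d) (by simp) P]
  exact foldl_exp_zero _ _ _

lemma nlopPow_zero (P : MvPolynomial (Fin d) A) : nlopPowG d T 0 P = P := by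
  rw [nlopPowG,
    foldl_congr_exp (nlopG d T) (fun β => (0 : Fin d →₀ ℕ) β) (fun _ => 0)
      (List.finRange d) (by simp) P]
  exact foldl_exp_zero _ _ _

include hTadd hTcomm

lemma lopPow_succ (N : Fin d →₀ ℕ) (α : Fin d) (P : MvPolynomial (Fin d) A) :
    lopPowG d T (N + Finsupp.single α 1) P = lopG d T α (lopPowG d T N P) := by
  classical
  have hpt : ∀ β ∈ List.finRange d,
      (fun γ => (N + Finsupp.single α 1 : Fin d →₀ ℕ) γ) β = (fun γ => N γ + if γ = α then 1 else 0) β := by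
    intro β _
    simp only [Finsupp.add_apply, Finsupp.single_apply]
    by_cases h : β = α
    · subst h; simp
    · simp [h, Ne.symm h]
  have h1 := foldl_congr_exp (lopG d T) (fun γ => (N + Finsupp.single α 1 : Fin d →₀ ℕ) γ)
      (fun γ => N γ + if γ = α then 1 else 0) (List.finRange d) hpt P
  have h2 := foldl_exp_succ (lopG d T) (fun β => N β) α
    (fun β γ x => lop_comm T hTadd hTcomm β γ x)
    (List.finRange d) (List.nodup_finRange d) (List.mem_finRange α) P
  exact h1.trans h2

lemma nlopPow_succ (N : Fin d →₀ ℕ) (α : Fin d) (P : MvPolynomial (Fin d) A) :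
    nlopPowG d T (N + Finsupp.single α 1) P = nlopG d T α (nlopPowG d T N P) := by
  classical
  have hpt : ∀ β ∈ List.finRange d,
      (fun γ => (N + Finsupp.single α 1 : Fin d →₀ ℕ) γ) β = (fun γ => N γ + if γ = α then 1 else 0) β := by
    intro β _
    simp only [Finsupp.add_apply, Finsupp.single_apply]
    by_cases h : β = α
    · subst h; simp
    · simp [h, Ne.symm h]
  have h1 := foldl_congr_exp (nlopG d T) (fun γ => (N + Finsupp.single α 1 : Fin d →₀ ℕ) γ)
      (fun γ => N γ + if γ = α then 1 else 0) (List.finRange d) hpt P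
  have h2 := foldl_exp_succ (nlopG d T) (fun β => N β) α
    (fun β γ x => nlop_comm T hTadd hTcomm β γ x)
    (List.finRange d) (List.nodup_finRange d) (List.mem_finRange α) P
  exact h1.trans h2

omit hTcomm

lemma lopPow_add_map (N : Fin d →₀ ℕ) (P Q : MvPolynomial (Fin d) A) :
    lopPowG d T N (P + Q) = lopPowG d T N P + lopPowG d T N Q := by
  rw [lopPowG, lopPowG, lopPowG]
  exact foldl_add_map (lopG d T) (fun β => N β) (fun β => lop_add T hTadd β) _ P Q

lemma nlopPow_add_map (N : Fin d →₀ ℕ) (P Q : MvPolynomial (Fin d) A) :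
    nlopPowG d T N (P + Q) = nlopPowG d T N P + nlopPowG d T N Q := by
  rw [nlopPowG, nlopPowG, nlopPowG]
  exact foldl_add_map (nlopG d T) (fun β => N β) (fun β => nlop_add T hTadd β) _ P Q

lemma lopPow_zero_map (N : Fin d →₀ ℕ) :
    lopPowG d T N (0 : MvPolynomial (Fin d) A) = 0 := by
  rw [lopPowG]
  exact foldl_zero (lopG d T) (fun β => N β) (fun β => lop_add T hTadd β) _

lemma nlopPow_zero_map (N : Fin d →₀ ℕ) :
    nlopPowG d T N (0 : MvPolynomial (Fin d) A) = 0 := by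
  rw [nlopPowG]
  exact foldl_zero (nlopG d T) (fun β => N β) (fun β => nlop_add T hTadd β) _

end Pow

section SupSum
variable {A : Type*} [CommRing A] {d : ℕ}

lemma skewAdj_zero (T : Fin d → A → A) : skewAdjG d T (0 : MvPolynomial (Fin d) A) = 0 := by
  rw [skewAdjG, MvPolynomial.support_zero, Finset.sum_empty]

lemma hatAct_zero_left (T : Fin d → A → A) (P : MvPolynomial (Fin d) A) :
    hatActG d T 0 P = 0 := by
  rw [hatActG, MvPolynomial.support_zero, Finset.sum_empty]

variable (T : Fin d → A → A)
  (hTadd : ∀ (α : Fin d) (x y : A), T α (x + y) = T α x + T α y)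

include hTadd in
lemma skewAdj_superset (P : MvPolynomial (Fin d) A) (s : Finset (Fin d →₀ ℕ))
    (hs : P.support ⊆ s) :
    skewAdjG d T P = ∑ m ∈ s, nlopPowG d T m (C (coeff m P)) := by
  rw [skewAdjG]
  refine Finset.sum_subset hs (fun m _ hm => ?_)
  rw [notMem_support_iff.1 hm, map_zero, nlopPow_zero_map T hTadd]

include hTadd in
lemma skewAdj_monomial (N : Fin d →₀ ℕ) (a : A) :
    skewAdjG d T (monomial N a) = nlopPowG d T N (C a) := by
  classical
  by_cases ha : a = 0
  · subst ha
    rw [monomial_zero, skewAdj_zero, map_zero, nlopPow_zero_map T hTadd]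
  · rw [skewAdjG, support_monomial, if_neg ha, Finset.sum_singleton]
    congr 2
    rw [coeff_monomial, if_pos rfl]

include hTadd in
lemma skewAdj_add (P Q : MvPolynomial (Fin d) A) :
    skewAdjG d T (P + Q) = skewAdjG d T P + skewAdjG d T Q := by
  classical
  rw [skewAdj_superset T hTadd (P + Q) (P.support ∪ Q.support)
      (MvPolynomial.support_add),
    skewAdj_superset T hTadd P (P.support ∪ Q.support) Finset.subset_union_left,
    skewAdj_superset T hTadd Q (P.support ∪ Q.support) Finset.subset_union_right,
    ← Finset.sum_add_distrib]
  refine Finset.sum_congr rfl fun m _ => ?_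
  rw [coeff_add, map_add, nlopPow_add_map T hTadd]

include hTadd in
lemma skewAdj_neg (P : MvPolynomial (Fin d) A) :
    skewAdjG d T (-P) = -skewAdjG d T P :=
  addmap_neg _ (skewAdj_add T hTadd) P

include hTadd in
lemma skewAdj_sub (P Q : MvPolynomial (Fin d) A) :
    skewAdjG d T (P - Q) = skewAdjG d T P - skewAdjG d T Q :=
  addmap_sub _ (skewAdj_add T hTadd) P Q

omit hTadd

lemma hatAct_superset (Q : MvPolynomial (Fin d) A) (s : Finset (Fin d →₀ ℕ))
    (hs : Q.support ⊆ s) (P : MvPolynomial (Fin d) A) :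
    hatActG d T Q P = ∑ m ∈ s, C (coeff m Q) * lopPowG d T m P := by
  rw [hatActG]
  refine Finset.sum_subset hs (fun m _ hm => ?_)
  rw [notMem_support_iff.1 hm, map_zero, zero_mul]

lemma hatAct_monomial (N : Fin d →₀ ℕ) (a : A) (P : MvPolynomial (Fin d) A) :
    hatActG d T (monomial N a) P = C a * lopPowG d T N P := by
  classical
  by_cases ha : a = 0
  · subst ha
    rw [monomial_zero, hatAct_zero_left, map_zero, zero_mul]
  · rw [hatActG, support_monomial, if_neg ha, Finset.sum_singleton]
    congr 2
    rw [coeff_monomial, if_pos rfl]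

lemma hatAct_add_left (Q₁ Q₂ P : MvPolynomial (Fin d) A) :
    hatActG d T (Q₁ + Q₂) P = hatActG d T Q₁ P + hatActG d T Q₂ P := by
  classical
  rw [hatAct_superset T (Q₁ + Q₂) (Q₁.support ∪ Q₂.support) (MvPolynomial.support_add) P,
    hatAct_superset T Q₁ (Q₁.support ∪ Q₂.support) Finset.subset_union_left P,
    hatAct_superset T Q₂ (Q₁.support ∪ Q₂.support) Finset.subset_union_right P,
    ← Finset.sum_add_distrib]
  refine Finset.sum_congr rfl fun m _ => ?_
  rw [coeff_add, map_add, add_mul]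

lemma hatAct_neg_left (Q P : MvPolynomial (Fin d) A) :
    hatActG d T (-Q) P = -hatActG d T Q P :=
  addmap_neg (fun Q => hatActG d T Q P) (fun x y => hatAct_add_left T x y P) Q

lemma ext_monomial {N' : Type*} [AddCommGroup N']
    (F1 F2 : MvPolynomial (Fin d) A → N')
    (h10 : F1 0 = 0) (h1add : ∀ x y, F1 (x + y) = F1 x + F1 y)
    (h20 : F2 0 = 0) (h2add : ∀ x y, F2 (x + y) = F2 x + F2 y)
    (hm : ∀ m a, F1 (monomial m a) = F2 (monomial m a)) (P : MvPolynomial (Fin d) A) :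
    F1 P = F2 P := by
  have h1 : F1 P = ∑ m ∈ P.support, F1 (monomial m (coeff m P)) := by
    conv_lhs => rw [P.as_sum]
    exact addf_sum F1 h10 h1add _ _
  have h2 : F2 P = ∑ m ∈ P.support, F2 (monomial m (coeff m P)) := by
    conv_lhs => rw [P.as_sum]
    exact addf_sum F2 h20 h2add _ _
  rw [h1, h2]
  exact Finset.sum_congr rfl fun m _ => hm m _

end SupSum

section KeyLemmas
variable {A : Type*} [CommRing A] {d : ℕ} (T : Fin d → A → A)
  (hTadd : ∀ (α : Fin d) (x y : A), T α (x + y) = T α x + T α y)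
  (hTcomm : ∀ (α β : Fin d) (x : A), T α (T β x) = T β (T α x))
  (hTmul : ∀ (α : Fin d) (x y : A), T α (x * y) = T α x * y + x * T α y)

include hTadd hTcomm in
lemma cder_nlop (α β : Fin d) (Q : MvPolynomial (Fin d) A) :
    cderG d (T α) (nlopG d T β Q) = nlopG d T β (cderG d (T α) Q) := by
  have hsub := addmap_sub (cderG d (T α)) (cder_add T hTadd α)
  have hneg := addmap_neg (cderG d (T α)) (cder_add T hTadd α)
  rw [nlopG, nlopG, hsub, hneg, cder_X_mul T hTadd, cder_cder T α β Q hTadd hTcomm]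

include hTadd hTcomm in
lemma cder_nlopPow (α : Fin d) (N : Fin d →₀ ℕ) :
    ∀ a : A, cderG d (T α) (nlopPowG d T N (C a)) = nlopPowG d T N (C (T α a)) := by
  refine midx_induction
    (fun N => ∀ a : A, cderG d (T α) (nlopPowG d T N (C a)) = nlopPowG d T N (C (T α a)))
    ?_ ?_ N
  · intro a
    rw [nlopPow_zero, nlopPow_zero, cder_C T hTadd]
  · intro N β ih a
    rw [nlopPow_succ T hTadd hTcomm, cder_nlop T hTadd hTcomm, ih a,
      ← nlopPow_succ T hTadd hTcomm]

include hTadd hTcomm in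
lemma X_mul_monomial' (α : Fin d) (N : Fin d →₀ ℕ) (a : A) :
    (X α : MvPolynomial (Fin d) A) * monomial N a = monomial (N + Finsupp.single α 1) a := by
  rw [X, monomial_mul, one_mul, add_comm]

include hTadd hTcomm in
lemma lop_monomial (α : Fin d) (N : Fin d →₀ ℕ) (a : A) :
    lopG d T α (monomial N a)
      = monomial (N + Finsupp.single α 1) a + monomial N (T α a) := by
  rw [lopG, cder_monomial T hTadd, X_mul_monomial' T hTadd hTcomm]

include hTadd hTcomm in
lemma skewAdj_lop (α : Fin d) (P : MvPolynomial (Fin d) A) :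
    skewAdjG d T (lopG d T α P) = -(X α * skewAdjG d T P) := by
  refine ext_monomial (fun P => skewAdjG d T (lopG d T α P))
    (fun P => -(X α * skewAdjG d T P)) ?_ ?_ ?_ ?_ ?_ P
  · beta_reduce; rw [lop_zero T hTadd, skewAdj_zero]
  · intro x y; beta_reduce; rw [lop_add T hTadd, skewAdj_add T hTadd]
  · beta_reduce; rw [skewAdj_zero, mul_zero, neg_zero]
  · intro x y; beta_reduce; rw [skewAdj_add T hTadd, mul_add, neg_add]
  · intro N a; beta_reduce
    rw [lop_monomial T hTadd hTcomm, skewAdj_add T hTadd, skewAdj_monomial T hTadd,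
      skewAdj_monomial T hTadd, nlopPow_succ T hTadd hTcomm, nlopG,
      ← cder_nlopPow T hTadd hTcomm, skewAdj_monomial T hTadd]
    ring

include hTadd hTcomm in
lemma skewAdj_X_mul (α : Fin d) (P : MvPolynomial (Fin d) A) :
    skewAdjG d T (X α * P) = -lopG d T α (skewAdjG d T P) := by
  refine ext_monomial (fun P => skewAdjG d T (X α * P))
    (fun P => -lopG d T α (skewAdjG d T P)) ?_ ?_ ?_ ?_ ?_ P
  · beta_reduce; rw [mul_zero, skewAdj_zero]
  · intro x y; beta_reduce; rw [mul_add, skewAdj_add T hTadd]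
  · beta_reduce; rw [skewAdj_zero, lop_zero T hTadd, neg_zero]
  · intro x y; beta_reduce; rw [skewAdj_add T hTadd, lop_add T hTadd, neg_add]
  · intro N a; beta_reduce
    rw [X_mul_monomial' T hTadd hTcomm, skewAdj_monomial T hTadd,
      nlopPow_succ T hTadd hTcomm, skewAdj_monomial T hTadd, nlop_eq]

include hTadd hTmul in
lemma lop_C_mul (α : Fin d) (a : A) (R : MvPolynomial (Fin d) A) :
    lopG d T α (C a * R) = C a * lopG d T α R + C (T α a) * R := by
  have hc : cderG d (T α) (C a * R) = C (T α a) * R + C a * cderG d (T α) R := by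
    apply MvPolynomial.ext; intro m
    rw [coeff_cderG _ (T_zero T hTadd α), coeff_C_mul, hTmul, coeff_add, coeff_C_mul,
      coeff_C_mul, coeff_cderG _ (T_zero T hTadd α)]
  rw [lopG, lopG, hc]
  ring

include hTadd hTcomm hTmul in
lemma hatAct_lop (α : Fin d) (h : A) (Q : MvPolynomial (Fin d) A) :
    hatActG d T (lopG d T α Q) (C h) = lopG d T α (hatActG d T Q (C h)) := by
  refine ext_monomial (fun Q => hatActG d T (lopG d T α Q) (C h))
    (fun Q => lopG d T α (hatActG d T Q (C h))) ?_ ?_ ?_ ?_ ?_ Q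
  · beta_reduce; rw [lop_zero T hTadd, hatAct_zero_left]
  · intro x y; beta_reduce; rw [lop_add T hTadd, hatAct_add_left]
  · beta_reduce; rw [hatAct_zero_left, lop_zero T hTadd]
  · intro x y; beta_reduce; rw [hatAct_add_left, lop_add T hTadd]
  · intro N a; beta_reduce
    rw [lop_monomial T hTadd hTcomm, hatAct_add_left, hatAct_monomial, hatAct_monomial,
      lopPow_succ T hTadd hTcomm, hatAct_monomial, lop_C_mul T hTadd hTmul]

include hTadd hTcomm hTmul in
lemma skewAdj_mul_C (h : A) (P : MvPolynomial (Fin d) A) :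
    skewAdjG d T (P * C h) = hatActG d T (skewAdjG d T P) (C h) := by
  have key : ∀ (N : Fin d →₀ ℕ) (a h : A),
      nlopPowG d T N (C (a * h)) = hatActG d T (nlopPowG d T N (C a)) (C h) := by
    intro N
    refine midx_induction
      (fun N => ∀ a h : A,
        nlopPowG d T N (C (a * h)) = hatActG d T (nlopPowG d T N (C a)) (C h)) ?_ ?_ N
    · intro a h
      rw [nlopPow_zero, nlopPow_zero, map_mul, C_apply (a := a), hatAct_monomial,
        lopPow_zero, ← C_apply]
    · intro N α ih a h
      rw [nlopPow_succ T hTadd hTcomm, nlopPow_succ T hTadd hTcomm, ih a h, nlop_eq,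
        nlop_eq, ← hatAct_lop T hTadd hTcomm hTmul, ← hatAct_neg_left]
  refine ext_monomial (fun P => skewAdjG d T (P * C h))
    (fun P => hatActG d T (skewAdjG d T P) (C h)) ?_ ?_ ?_ ?_ ?_ P
  · beta_reduce; rw [zero_mul, skewAdj_zero]
  · intro x y; beta_reduce; rw [add_mul, skewAdj_add T hTadd]
  · beta_reduce; rw [skewAdj_zero, hatAct_zero_left]
  · intro x y; beta_reduce; rw [skewAdj_add T hTadd, hatAct_add_left]
  · intro N a; beta_reduce
    have hmm : (monomial N a : MvPolynomial (Fin d) A) * C h = monomial N (a * h) := by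
      rw [C_apply, monomial_mul, add_zero]
    rw [hmm, skewAdj_monomial T hTadd, skewAdj_monomial T hTadd, key N a h]

include hTadd hTcomm hTmul in
lemma skewAdj_hatAct (g : A) (P : MvPolynomial (Fin d) A) :
    skewAdjG d T (hatActG d T P (C g)) = skewAdjG d T P * C g := by
  have key : ∀ (N : Fin d →₀ ℕ) (a g : A),
      skewAdjG d T (C a * lopPowG d T N (C g)) = nlopPowG d T N (C a) * C g := by
    intro N
    refine midx_induction
      (fun N => ∀ a g : A,
        skewAdjG d T (C a * lopPowG d T N (C g)) = nlopPowG d T N (C a) * C g) ?_ ?_ N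
    · intro a g
      simp only [lopPow_zero, nlopPow_zero]
      rw [← map_mul, C_apply (a := a * g), skewAdj_monomial T hTadd, nlopPow_zero, map_mul]
      exact (map_mul C a g).symm.trans C_apply
    · intro N α ih a g
      set R := lopPowG d T N (C g) with hR
      have h3 := lop_C_mul T hTadd hTmul α a R
      have hrw : C a * lopG d T α R = lopG d T α (C a * R) - C (T α a) * R := by
        rw [h3]; ring
      rw [lopPow_succ T hTadd hTcomm, ← hR, hrw, skewAdj_sub T hTadd,
        skewAdj_lop T hTadd hTcomm, ih a g, ih (T α a) g,
        nlopPow_succ T hTadd hTcomm, nlopG, ← cder_nlopPow T hTadd hTcomm]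
      ring
  refine ext_monomial (fun P => skewAdjG d T (hatActG d T P (C g)))
    (fun P => skewAdjG d T P * C g) ?_ ?_ ?_ ?_ ?_ P
  · beta_reduce; rw [hatAct_zero_left, skewAdj_zero]
  · intro x y; beta_reduce; rw [hatAct_add_left, skewAdj_add T hTadd]
  · beta_reduce; rw [skewAdj_zero, zero_mul]
  · intro x y; beta_reduce; rw [skewAdj_add T hTadd, add_mul]
  · intro N a; beta_reduce
    rw [hatAct_monomial, skewAdj_monomial T hTadd, key N a g]

include hTadd hTcomm hTmul in
lemma hatAct_C_one (Q : MvPolynomial (Fin d) A) : hatActG d T Q (C 1) = Q := by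
  have hTone : ∀ α, T α (1 : A) = 0 := by
    intro α
    have := hTmul α 1 1
    simp only [mul_one, one_mul] at this
    have h2 : T α 1 + T α 1 = T α 1 := this.symm
    exact add_eq_left.mp h2
  have hpow : ∀ N : Fin d →₀ ℕ, lopPowG d T N (C (1 : A)) = monomial N 1 := by
    refine midx_induction (fun N => lopPowG d T N (C (1 : A)) = monomial N 1) ?_ ?_
    · beta_reduce; rw [lopPow_zero, C_apply]
    · intro N α ih
      rw [lopPow_succ T hTadd hTcomm, ih, lop_monomial T hTadd hTcomm, hTone,
        monomial_zero, add_zero]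
  rw [hatActG]
  have : ∀ m ∈ Q.support, C (coeff m Q) * lopPowG d T m (C (1:A)) = monomial m (coeff m Q) := by
    intro m _
    rw [hpow m, C_mul_monomial, mul_one]
  rw [Finset.sum_congr rfl this, ← Q.as_sum]

end KeyLemmas

section Final
variable {n d : ℕ} (B : DP n d → DP n d → MvPolynomial (Fin d) (DP n d))

private lemma hTa : ∀ (α : Fin d) (x y : DP n d),
    tder n d α (x + y) = tder n d α x + tder n d α y := fun α x y => tder_add n d α x y
private lemma hTc : ∀ (α β : Fin d) (x : DP n d),
    tder n d α (tder n d β x) = tder n d β (tder n d α x) := fun α β x => tder_comm n d α β x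
private lemma hTm : ∀ (α : Fin d) (x y : DP n d),
    tder n d α (x * y) = tder n d α x * y + x * tder n d α y := fun α x y => tder_mul n d α x y

lemma B_one_left (hll : LLeibG d (tder n d) B) (g : DP n d) : B 1 g = 0 := by
  have h := hll 1 1 g
  rw [one_mul, hatAct_C_one (tder n d) hTa hTc hTm] at h
  exact add_eq_left.mp h.symm

lemma B_one_right (hrl : RLeibG d B) (g : DP n d) : B g 1 = 0 := by
  have h := hrl g 1 1
  rw [one_mul, map_one, mul_one] at h
  exact add_eq_left.mp h.symm

lemma B_C_left (hbil : BilinG d B) (hll : LLeibG d (tder n d) B) (r : ℝ) (g : DP n d) :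
    B (C r) g = 0 := by
  have hc : (C r : DP n d) = r • 1 := by rw [MvPolynomial.smul_eq_C_mul, mul_one]
  rw [hc, hbil.2.1, B_one_left B hll, smul_zero]

lemma B_C_right (hbil : BilinG d B) (hrl : RLeibG d B) (r : ℝ) (g : DP n d) :
    B g (C r) = 0 := by
  have hc : (C r : DP n d) = r • 1 := by rw [MvPolynomial.smul_eq_C_mul, mul_one]
  rw [hc, hbil.2.2.2, B_one_right B hrl, smul_zero]

lemma skew_C_left (hbil : BilinG d B) (hrl : RLeibG d B) (hll : LLeibG d (tder n d) B)
    (r : ℝ) (g : DP n d) : SkewOnG d (tder n d) B (C r) g := by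
  rw [SkewOnG, B_C_right B hbil hrl, B_C_left B hbil hll, skewAdj_zero, neg_zero]

lemma skew_C_right (hbil : BilinG d B) (hrl : RLeibG d B) (hll : LLeibG d (tder n d) B)
    (r : ℝ) (f : DP n d) : SkewOnG d (tder n d) B f (C r) := by
  rw [SkewOnG, B_C_left B hbil hll, B_C_right B hbil hrl, skewAdj_zero, neg_zero]

lemma skew_add_right (hbil : BilinG d B) {f g₁ g₂ : DP n d}
    (h1 : SkewOnG d (tder n d) B f g₁) (h2 : SkewOnG d (tder n d) B f g₂) :
    SkewOnG d (tder n d) B f (g₁ + g₂) := by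
  rw [SkewOnG] at h1 h2 ⊢
  rw [hbil.1, h1, h2, hbil.2.2.1, skewAdj_add (tder n d) hTa]
  ring

lemma skew_add_left (hbil : BilinG d B) {f₁ f₂ g : DP n d}
    (h1 : SkewOnG d (tder n d) B f₁ g) (h2 : SkewOnG d (tder n d) B f₂ g) :
    SkewOnG d (tder n d) B (f₁ + f₂) g := by
  rw [SkewOnG] at h1 h2 ⊢
  rw [hbil.2.2.1, h1, h2, hbil.1, skewAdj_add (tder n d) hTa]
  ring

lemma skew_tder_right (hses : SesqG d (tder n d) B) {f g : DP n d} (α : Fin d)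
    (hk : SkewOnG d (tder n d) B f g) :
    SkewOnG d (tder n d) B f (tder n d α g) := by
  rw [SkewOnG] at hk ⊢
  rw [(hses α g f).1, hk, (hses α f g).2, skewAdj_lop (tder n d) hTa hTc α]
  ring

lemma skew_tder_left (hses : SesqG d (tder n d) B) {f g : DP n d} (α : Fin d)
    (hk : SkewOnG d (tder n d) B f g) :
    SkewOnG d (tder n d) B (tder n d α f) g := by
  rw [SkewOnG] at hk ⊢
  rw [(hses α g f).2, hk, (hses α f g).1, skewAdj_neg (tder n d) hTa,
    skewAdj_X_mul (tder n d) hTa hTc α, lop_neg (tder n d) hTa]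
  ring

lemma skew_mul_right (hbil : BilinG d B) (hrl : RLeibG d B) (hll : LLeibG d (tder n d) B)
    {f g h : DP n d} (hg : SkewOnG d (tder n d) B f g) (hh : SkewOnG d (tder n d) B f h) :
    SkewOnG d (tder n d) B f (g * h) := by
  rw [SkewOnG] at hg hh ⊢
  rw [hll g h f, hg, hh, hrl f g h, skewAdj_add (tder n d) hTa,
    skewAdj_mul_C (tder n d) hTa hTc hTm, skewAdj_mul_C (tder n d) hTa hTc hTm,
    hatAct_neg_left, hatAct_neg_left]
  ring

lemma skew_mul_left (hbil : BilinG d B) (hrl : RLeibG d B) (hll : LLeibG d (tder n d) B)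
    {f g h : DP n d} (hf : SkewOnG d (tder n d) B f h) (hg : SkewOnG d (tder n d) B g h) :
    SkewOnG d (tder n d) B (f * g) h := by
  rw [SkewOnG] at hf hg ⊢
  rw [hrl h f g, hf, hg, hll f g h, skewAdj_add (tder n d) hTa,
    skewAdj_hatAct (tder n d) hTa hTc hTm, skewAdj_hatAct (tder n d) hTa hTc hTm]
  ring

lemma skew_gen_all (hbil : BilinG d B) (hses : SesqG d (tder n d) B)
    (hrl : RLeibG d B) (hll : LLeibG d (tder n d) B)
    (hgen : ∀ i j : Fin n, SkewOnG d (tder n d) B (genU n d i) (genU n d j)) :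
    ∀ f g : DP n d, SkewOnG d (tder n d) B f g := by
  have hX : ∀ (v w : Fin n × MIdx d), SkewOnG d (tder n d) B (X v) (X w) := by
    have h1 : ∀ (i j : Fin n) (J : MIdx d),
        SkewOnG d (tder n d) B (X (i, 0)) (X (j, J)) := by
      intro i j J
      refine midx_induction (fun J => SkewOnG d (tder n d) B (X (i, 0)) (X (j, J))) ?_ ?_ J
      · exact hgen i j
      · intro J α ih
        have ht : tder n d α (X (j, J)) = X (j, J + Finsupp.single α 1) := tder_X n d α (j, J)
        rw [← ht]
        exact skew_tder_right B hses α ih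
    intro v w
    obtain ⟨i, I⟩ := v
    obtain ⟨j, J⟩ := w
    refine midx_induction (fun I => SkewOnG d (tder n d) B (X (i, I)) (X (j, J))) ?_ ?_ I
    · exact h1 i j J
    · intro I α ih
      have ht : tder n d α (X (i, I)) = X (i, I + Finsupp.single α 1) := tder_X n d α (i, I)
      rw [← ht]
      exact skew_tder_left B hses α ih
  have hXany : ∀ (v : Fin n × MIdx d) (g : DP n d), SkewOnG d (tder n d) B (X v) g := by
    intro v g
    induction g using MvPolynomial.induction_on with
    | C r => exact skew_C_right B hbil hrl hll r _
    | add p q hp hq => exact skew_add_right B hbil hp hq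
    | mul_X p w hp => exact skew_mul_right B hbil hrl hll hp (hX v w)
  intro f g
  induction f using MvPolynomial.induction_on with
  | C r => exact skew_C_left B hbil hrl hll r _
  | add p q hp hq => exact skew_add_left B hbil hp hq
  | mul_X p w hp => exact skew_mul_left B hbil hrl hll hp (hXany w g)

end Final

theorem stmt3 (n d : ℕ) (hn : 1 ≤ n) (hd : 1 ≤ d)
    (B : DP n d → DP n d → MvPolynomial (Fin d) (DP n d))
    (hbil : BilinG d B) (hses : SesqG d (tder n d) B)
    (hrl : RLeibG d B) (hll : LLeibG d (tder n d) B) :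
    (∀ f g : DP n d, SkewOnG d (tder n d) B f g) ↔
      (∀ i j : Fin n, SkewOnG d (tder n d) B (genU n d i) (genU n d j)) := by
  constructor
  · intro h i j
    exact h _ _
  · intro hgen f g
    exact skew_gen_all B hbil hses hrl hll hgen f g
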